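/- arXiv:2206.06046 — 4 statements merged into one kernel-verified Lean document; each statement's English description precedes it below -/
import Mathlib

section
/- For every LFD formula ψ, standard first-order model M (over the signature extended with an n-ary relation symbol A), and assignment s with M,s ⊨ A(v₁,...,vₙ), we have: the dependence model T(M) obtained by extracting the team encoded by A satisfies ψ at s if and only if M,s ⊨ tr(ψ) ∧ A(v₁,...,vₙ), where tr is the compositional first-order translation of LFD. -/
namespace LFDPaper

/-- A relational structure over signature `Rel` with arities `ar`. -/
structure Str (Rel : Type) (ar : Rel → ℕ) (α : Type) where
  interp : ∀ R : Rel, (Fin (ar R) → α) → Prop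

/-- Syntax of LFD over relational signature `(Rel, ar)` and variables `Var`. -/
inductive LFD (Rel : Type) (ar : Rel → ℕ) (Var : Type) where
  | atom : (R : Rel) → (Fin (ar R) → Var) → LFD Rel ar Var
  | dep  : Finset Var → Var → LFD Rel ar Var
  | and  : LFD Rel ar Var → LFD Rel ar Var → LFD Rel ar Var
  | neg  : LFD Rel ar Var → LFD Rel ar Var
  | ex   : Finset Var → LFD Rel ar Var → LFD Rel ar Var

variable {Rel Var α β X : Type} {ar : Rel → ℕ}

/-- LFD semantics over a dependence model `(M, A)`. -/
def LFD.sat (M : Str Rel ar α) (A : Set (Var → α)) : (Var → α) → LFD Rel ar Var → Prop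
  | s, .atom R vs => M.interp R (fun i => s (vs i))
  | s, .dep V u => ∀ t ∈ A, (∀ v ∈ V, s v = t v) → s u = t u
  | s, .and φ ψ => LFD.sat M A s φ ∧ LFD.sat M A s ψ
  | s, .neg φ => ¬ LFD.sat M A s φ
  | s, .ex V φ => ∃ t ∈ A, (∀ v ∈ V, s v = t v) ∧ LFD.sat M A t φ

/-- Free variables of an LFD formula. -/
def LFD.free [DecidableEq Var] : LFD Rel ar Var → Finset Var
  | .atom _ vs => Finset.image vs Finset.univ
  | .dep V _ => V
  | .and φ ψ => φ.free ∪ ψ.free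
  | .neg φ => φ.free
  | .ex V _ => V

/-- First-order syntax with named variables `X`, with polyadic quantification `exs`. -/
inductive FO (Rel : Type) (ar : Rel → ℕ) (X : Type) where
  | atom : (R : Rel) → (Fin (ar R) → X) → FO Rel ar X
  | eq : X → X → FO Rel ar X
  | tru : FO Rel ar X
  | and : FO Rel ar X → FO Rel ar X → FO Rel ar X
  | neg : FO Rel ar X → FO Rel ar X
  | exs : Finset X → FO Rel ar X → FO Rel ar X

/-- Tarskian satisfaction for `FO` (total assignments `X → α`). -/
def FO.sat (M : Str Rel ar α) : (X → α) → FO Rel ar X → Prop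
  | s, .atom R vs => M.interp R (fun i => s (vs i))
  | s, .eq x y => s x = s y
  | _, .tru => True
  | s, .and φ ψ => FO.sat M s φ ∧ FO.sat M s ψ
  | s, .neg φ => ¬ FO.sat M s φ
  | s, .exs Z φ => ∃ t : X → α, (∀ x ∉ Z, t x = s x) ∧ FO.sat M t φ

def FO.imp (φ ψ : FO Rel ar X) : FO Rel ar X := .neg (.and φ (.neg ψ))
def FO.fall (Z : Finset X) (φ : FO Rel ar X) : FO Rel ar X := .neg (.exs Z (.neg φ))
def FO.bigAnd (l : List (FO Rel ar X)) : FO Rel ar X := l.foldr FO.and .tru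

def FO.free [DecidableEq X] : FO Rel ar X → Finset X
  | .atom _ vs => Finset.image vs Finset.univ
  | .eq x y => {x, y}
  | .tru => ∅
  | .and φ ψ => φ.free ∪ ψ.free
  | .neg φ => φ.free
  | .exs Z φ => φ.free \ Z

/-- The (equality-free) guarded fragment: all quantification is of the form
`∃ȳ (G(x̄,ȳ) ∧ ψ)` with `G` an atom whose variables cover all free variables of the body. -/
inductive IsGF [DecidableEq X] : FO Rel ar X → Prop
  | atom (R : Rel) (vs : Fin (ar R) → X) : IsGF (.atom R vs)
  | and {φ ψ : FO Rel ar X} : IsGF φ → IsGF ψ → IsGF (.and φ ψ)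
  | neg {φ : FO Rel ar X} : IsGF φ → IsGF (.neg φ)
  | exg {Z : Finset X} {G : Rel} {vs : Fin (ar G) → X} {φ : FO Rel ar X} :
      IsGF φ →
      FO.free (.and (.atom G vs) φ) ⊆ Finset.image vs Finset.univ →
      IsGF (.exs Z (.and (.atom G vs) φ))

/-! ### Dependence bisimulations and distinguished models -/

/-- The set of variables on which two assignments agree. -/
def eqSet (s t : Var → α) : Set Var := {v | s v = t v}

/-- `V` is dependence-closed at `s` (w.r.t. team `A`). -/
def depClosedAt (A : Set (Var → α)) (s : Var → α) (V : Set Var) : Prop :=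
  {u | ∀ t ∈ A, (∀ v ∈ V, s v = t v) → s u = t u} = V

/-- Semantic dependence-closure operator. -/
def DclSem (A : Set (Var → α)) (s : Var → α) (V : Set Var) : Set Var :=
  {u | ∀ t ∈ A, (∀ v ∈ V, s v = t v) → s u = t u}

/-- Dependence bisimulation between dependence models. -/
def DepBisim (M : Str Rel ar α) (A : Set (Var → α)) (M' : Str Rel ar β) (A' : Set (Var → β))
    (Z : Set ((Var → α) × (Var → β))) : Prop :=
  (∀ p ∈ Z, p.1 ∈ A ∧ p.2 ∈ A') ∧
  ∀ p ∈ Z,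
    (∀ (R : Rel) (vs : Fin (ar R) → Var),
        M.interp R (fun i => p.1 (vs i)) ↔ M'.interp R (fun i => p.2 (vs i))) ∧
    (∀ t ∈ A, ∃ t' ∈ A', eqSet p.1 t ⊆ eqSet p.2 t' ∧ (t, t') ∈ Z ∧
        depClosedAt A' p.2 (eqSet p.1 t)) ∧
    (∀ t' ∈ A', ∃ t ∈ A, eqSet p.2 t' ⊆ eqSet p.1 t ∧ (t, t') ∈ Z ∧
        depClosedAt A p.1 (eqSet p.2 t'))

/-- A team is distinguished if every domain value can be assigned to at most one variable. -/
def Distinguished (A : Set (Var → α)) : Prop :=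
  ∀ s ∈ A, ∀ t ∈ A, ∀ v w, s v = t w → v = w

/-- The distinguished companion of an assignment. -/
def sd (s : Var → α) : Var → Var × α := fun v => (v, s v)

/-- The distinguished companion team. -/
def Ad (A : Set (Var → α)) : Set (Var → Var × α) := sd '' A

/-- The distinguished companion structure. -/
def Md (M : Str Rel ar α) (A : Set (Var → α)) : Str Rel ar (Var × α) :=
  ⟨fun R t => ∃ s ∈ A, ∃ us : Fin (ar R) → Var,
      (∀ i, t i = (us i, s (us i))) ∧ M.interp R (fun i => s (us i))⟩

/-! ### The transformation G, guarded sets and guarded bisimulations -/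

/-- `G` keeps the same domain and restricts relations to tuples covered by a single
admissible assignment. -/
def Gmap (M : Str Rel ar α) (A : Set (Var → α)) : Str Rel ar α :=
  ⟨fun R t => M.interp R t ∧ ∃ s ∈ A, ∀ i, ∃ v, t i = s v⟩

def GuardedSet (M : Str Rel ar α) (B : Set α) : Prop :=
  ∃ (R : Rel) (t : Fin (ar R) → α), M.interp R t ∧ B ⊆ Set.range t

def GuardedAssign (M : Str Rel ar α) (s : X → α) : Prop :=
  ∃ (R : Rel) (t : Fin (ar R) → α), M.interp R t ∧ ∀ x, ∃ i, s x = t i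

/-- Guarded bisimulation (equality-free version): a nonempty family of partial maps
(with guarded domains) preserving atoms both ways, with back-and-forth conditions
along guarded sets. -/
def GBisim (M : Str Rel ar α) (N : Str Rel ar β) (F : Set (Set α × (α → β))) : Prop :=
  F.Nonempty ∧ ∀ p ∈ F,
    GuardedSet M p.1 ∧
    (∀ (R : Rel) (t : Fin (ar R) → α), (∀ i, t i ∈ p.1) →
        (M.interp R t ↔ N.interp R (fun i => p.2 (t i)))) ∧
    (∀ B : Set α, GuardedSet M B → ∃ q ∈ F, q.1 = B ∧ ∀ a ∈ p.1 ∩ B, q.2 a = p.2 a) ∧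
    (∀ C : Set β, GuardedSet N C → ∃ q ∈ F, q.2 '' q.1 = C ∧ ∀ a ∈ p.1 ∩ q.1, q.2 a = p.2 a)

/-! ### The translation τ from GF to LFD -/

def ltop [Inhabited Var] : LFD Rel ar Var := .dep {default} default
def lbot [Inhabited Var] : LFD Rel ar Var := .neg ltop
def lor (φ ψ : LFD Rel ar Var) : LFD Rel ar Var := .neg (.and (.neg φ) (.neg ψ))
def lbigOr [Inhabited Var] (l : List (LFD Rel ar Var)) : LFD Rel ar Var := l.foldr lor lbot

/-- Compositional translation from (guarded) first-order formulas to LFD,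
relative to a variable correspondence `ρ`. -/
noncomputable def tau [Inhabited Var] [Fintype Var] [DecidableEq Var] [Fintype X] [DecidableEq X] :
    FO Rel ar X → (X → Var) → LFD Rel ar Var
  | .atom R vs, ρ => .atom R (fun i => ρ (vs i))
  | .eq _ _, _ => lbot
  | .tru, _ => ltop
  | .and φ ψ, ρ => .and (tau φ ρ) (tau ψ ρ)
  | .neg φ, ρ => .neg (tau φ ρ)
  | .exs Z φ, ρ => lbigOr
      ((((Finset.univ : Finset (X → Var)).filter (fun ρ' => ∀ x ∉ Z, ρ' x = ρ x)).toList).map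
        (fun ρ' => LFD.ex (Finset.image ρ (FO.free (FO.exs Z φ))) (tau φ ρ')))

/-! ### The first-order translation tr of LFD, and the transformation T -/

/-- Extended signature: the original relations plus a team relation `A` of arity `n`. -/
def exar (ar : Rel → ℕ) (n : ℕ) : Option Rel → ℕ
  | none => n
  | some R => ar R

/-- `A(v₁,…,vₙ)` (unprimed variables). -/
def atomA0 {n : ℕ} : FO (Option Rel) (exar ar n) (Fin n ⊕ Fin n) :=
  .atom none (fun i => Sum.inl i)

/-- `A(v₁′,…,vₙ′)` (primed variables). -/
def atomA0' {n : ℕ} : FO (Option Rel) (exar ar n) (Fin n ⊕ Fin n) :=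
  .atom none (fun i => Sum.inr i)

/-- The compositional first-order translation of LFD. -/
noncomputable def tr {n : ℕ} : LFD Rel ar (Fin n) → FO (Option Rel) (exar ar n) (Fin n ⊕ Fin n)
  | .atom R vs => .atom (some R) (fun i => Sum.inl (vs i))
  | .dep V u => FO.fall (Finset.image Sum.inr Finset.univ)
      (FO.imp atomA0'
        (FO.imp (FO.bigAnd (V.toList.map (fun v => FO.eq (Sum.inl v) (Sum.inr v))))
          (FO.eq (Sum.inl u) (Sum.inr u))))
  | .and φ ψ => .and (tr φ) (tr ψ)
  | .neg φ => .neg (tr φ)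
  | .ex V φ => .exs (Finset.image Sum.inl (Finset.univ \ V)) (.and atomA0 (tr φ))

/-- Extract a dependence model from a structure over the extended signature. -/
def Tmap {n : ℕ} (M : Str (Option Rel) (exar ar n) α) : Str Rel ar α × Set (Fin n → α) :=
  (⟨fun R t => M.interp (some R) t⟩, {s | M.interp none s})

/-- Inverse: expand a dependence model with the team relation. -/
def Tinv {n : ℕ} (N : Str Rel ar α × Set (Fin n → α)) : Str (Option Rel) (exar ar n) α :=
  ⟨fun R => match R with
    | none => fun t => t ∈ N.2
    | some R' => fun t => N.1.interp R' t⟩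

/-! ### Closure, types and type models -/

def sneg : LFD Rel ar Var → LFD Rel ar Var
  | .neg φ => φ
  | φ => .neg φ

def subL : LFD Rel ar Var → List (LFD Rel ar Var)
  | .atom R vs => [.atom R vs]
  | .dep V u => [.dep V u]
  | .and φ ψ => .and φ ψ :: (subL φ ++ subL ψ)
  | .neg φ => .neg φ :: subL φ
  | .ex V φ => .ex V φ :: subL φ

/-- The closure `Cl(ψ)` (as a list): subformulas, all dependence atoms, and single negations. -/
noncomputable def ClL [Fintype Var] [DecidableEq Var] (ψ : LFD Rel ar Var) : List (LFD Rel ar Var) :=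
  let S := subL ψ ++ (Finset.univ : Finset (Finset Var × Var)).toList.map (fun p => LFD.dep p.1 p.2)
  S ++ S.map sneg

def Cl [Fintype Var] [DecidableEq Var] (ψ : LFD Rel ar Var) : Set (LFD Rel ar Var) :=
  {χ | χ ∈ ClL ψ}

/-- Types for ψ. -/
structure IsType [Fintype Var] [DecidableEq Var] (ψ : LFD Rel ar Var)
    (Δ : Set (LFD Rel ar Var)) : Prop where
  subset : Δ ⊆ Cl ψ
  negc : ∀ χ, LFD.neg χ ∈ Cl ψ → (LFD.neg χ ∈ Δ ↔ χ ∉ Δ)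
  andc : ∀ χ ξ, LFD.and χ ξ ∈ Cl ψ → (LFD.and χ ξ ∈ Δ ↔ χ ∈ Δ ∧ ξ ∈ Δ)
  exc : ∀ (V : Finset Var) χ, LFD.ex V χ ∈ Cl ψ → χ ∈ Δ → LFD.ex V χ ∈ Δ
  proj : ∀ (V : Finset Var), ∀ u ∈ V, LFD.dep V u ∈ Δ
  tran : ∀ V U W : Finset Var, (∀ u ∈ U, LFD.dep V u ∈ Δ) → (∀ w ∈ W, LFD.dep U w ∈ Δ) →
    ∀ w ∈ W, LFD.dep V w ∈ Δ

/-- `Δ ∼_V Δ'`: the two types contain the same formulas with free variables in `V`. -/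
def SimV [DecidableEq Var] (V : Set Var) (Δ Δ' : Set (LFD Rel ar Var)) : Prop :=
  ∀ χ : LFD Rel ar Var, ↑χ.free ⊆ V → (χ ∈ Δ ↔ χ ∈ Δ')

/-- Dependence closure of `V` w.r.t. a type `Δ`. -/
def Dcl (Δ : Set (LFD Rel ar Var)) (V : Finset Var) : Set Var := {u | LFD.dep V u ∈ Δ}

/-- LFD type models. -/
def IsTypeModel [Fintype Var] [DecidableEq Var] (ψ : LFD Rel ar Var)
    (TM : Set (Set (LFD Rel ar Var))) : Prop :=
  (∀ Δ ∈ TM, IsType ψ Δ) ∧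
  (∀ Δ ∈ TM, ∀ Δ' ∈ TM, SimV ∅ Δ Δ') ∧
  (∀ Δ ∈ TM, ∀ (V : Finset Var) (χ : LFD Rel ar Var), LFD.ex V χ ∈ Δ →
    ∃ Δ' ∈ TM, SimV (Dcl Δ V) Δ Δ' ∧ χ ∈ Δ')

/-! ### The expanded signature Ŝ and the translation tr• -/

/-- The expanded signature `Ŝ`: the base relations, the team relation `A`,
and proxy relations `R^{V,U}` for dependence atoms. -/
inductive HatRel (Rel : Type) (n : ℕ) where
  | base : Rel → HatRel Rel n
  | teamA : HatRel Rel n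
  | drel : Finset (Fin n) → Finset (Fin n) → HatRel Rel n

def har (ar : Rel → ℕ) (n : ℕ) : HatRel Rel n → ℕ
  | .base R => ar R
  | .teamA => n
  | .drel V _ => V.card

/-- Canonical enumeration of a finite set of variables. -/
def enumV {n : ℕ} (V : Finset (Fin n)) : Fin V.card → Fin n :=
  fun i => ((V.orderIsoOfFin rfl) i : Fin n)

def atomAhat {n : ℕ} : FO (HatRel Rel n) (har ar n) (Fin n) := .atom .teamA (fun i => i)

/-- The modified first-order translation `tr•`, sending dependence atoms to proxy relations. -/
def trb {n : ℕ} : LFD Rel ar (Fin n) → FO (HatRel Rel n) (har ar n) (Fin n)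
  | .atom R vs => .atom (.base R) vs
  | .dep V u => .atom (.drel V {u}) (enumV V)
  | .and φ ψ => .and (trb φ) (trb ψ)
  | .neg φ => .neg (trb φ)
  | .ex V φ => .exs (Finset.univ \ V) (.and atomAhat (trb φ))

def nonDecomp : LFD Rel ar Var → Bool
  | .and _ _ => false
  | .neg _ => false
  | _ => true

def allGuard {n : ℕ} (φ : FO (HatRel Rel n) (har ar n) (Fin n)) :
    FO (HatRel Rel n) (har ar n) (Fin n) :=
  FO.fall Finset.univ (FO.imp atomAhat φ)

/-- `setup(ψ)`: A-guarded projection, transitivity and transfer axioms. -/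
noncomputable def setup {n : ℕ} (ψ : LFD Rel ar (Fin n)) : FO (HatRel Rel n) (har ar n) (Fin n) :=
  FO.bigAnd (
    ((Finset.univ : Finset (Finset (Fin n))).toList.map (fun V =>
      allGuard (FO.bigAnd (V.toList.map (fun u => FO.atom (.drel V {u}) (enumV V))))))
    ++ ((Finset.univ : Finset (Finset (Fin n) × Finset (Fin n) × Finset (Fin n))).toList.map
        (fun (p : Finset (Fin n) × Finset (Fin n) × Finset (Fin n)) => allGuard (FO.imp
          (FO.and (.atom (.drel p.1 p.2.1) (enumV p.1)) (.atom (.drel p.2.1 p.2.2) (enumV p.2.1)))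
          (.atom (.drel p.1 p.2.2) (enumV p.1)))))
    ++ (((Finset.univ : Finset (Finset (Fin n) × Finset (Fin n))).toList.map (fun (p : Finset (Fin n) × Finset (Fin n)) =>
        ((ClL ψ).filter (fun χ => nonDecomp χ)).map (fun ξ =>
          allGuard (FO.imp (FO.and (.atom (.drel p.1 p.2) (enumV p.1)) (trb (.ex p.1 ξ)))
            (trb (.ex (p.1 ∪ p.2) ξ)))))).flatten))

/-- `type^ψ(M,s)`. -/
def typeOf {n : ℕ} (ψ : LFD Rel ar (Fin n)) (M : Str (HatRel Rel n) (har ar n) α)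
    (s : Fin n → α) : Set (LFD Rel ar (Fin n)) :=
  {χ | χ ∈ Cl ψ ∧ FO.sat M s (trb χ)}

/-! ### Extended τ over the signature Ŝ -/

noncomputable def depSet [DecidableEq Var] [Inhabited Var] (V U : Finset Var) : LFD Rel ar Var :=
  (U.toList.map (fun u => LFD.dep V u)).foldr LFD.and ltop

/-- The translation τ extended to the expanded signature Ŝ. -/
noncomputable def tauHat {n : ℕ} [NeZero n] :
    FO (HatRel Rel n) (har ar n) (Fin n) → (Fin n → Fin n) → LFD Rel ar (Fin n)
  | .atom (.base R) vs, ρ => .atom R (fun i => ρ (vs i))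
  | .atom .teamA vs, ρ =>
      if (fun i : Fin n => ρ (vs i)) = (fun i : Fin n => i) then ltop else lbot
  | .atom (.drel U V) _, ρ => depSet (Finset.image ρ U) (Finset.image ρ V)
  | .eq _ _, _ => lbot
  | .tru, _ => ltop
  | .and φ ψ, ρ => .and (tauHat φ ρ) (tauHat ψ ρ)
  | .neg φ, ρ => .neg (tauHat φ ρ)
  | .exs Z φ, ρ => lbigOr
      ((((Finset.univ : Finset (Fin n → Fin n)).filter (fun ρ' => ∀ x ∉ Z, ρ' x = ρ x)).toList).map
        (fun ρ' => LFD.ex (Finset.image ρ (FO.free (FO.exs Z φ))) (tauHat φ ρ')))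

lemma sat_bigAnd {Rel X α : Type} {ar : Rel → ℕ} (M : Str Rel ar α) (s : X → α)
    (l : List (FO Rel ar X)) : FO.sat M s (FO.bigAnd l) ↔ ∀ φ ∈ l, FO.sat M s φ := by
  induction l with
  | nil => simp [FO.bigAnd, FO.sat]
  | cons a l ih =>
    simp only [FO.bigAnd, List.foldr] at *
    simp only [FO.sat, ih, List.mem_cons]
    constructor
    · rintro ⟨h1, h2⟩ φ (rfl | hφ)
      · exact h1
      · exact h2 φ hφ
    · intro h; exact ⟨h a (Or.inl rfl), fun φ hφ => h φ (Or.inr hφ)⟩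

lemma tr_sat {Rel α : Type} {ar : Rel → ℕ} {n : ℕ}
    (ψ : LFD Rel ar (Fin n)) (M : Str (Option Rel) (exar ar n) α) :
    ∀ s : (Fin n ⊕ Fin n) → α,
    LFD.sat (Tmap M).1 (Tmap M).2 (fun v => s (Sum.inl v)) ψ ↔ FO.sat M s (tr ψ) := by
  induction ψ with
  | atom R vs => intro s; exact Iff.rfl
  | and φ χ ihφ ihχ => intro s; simp [LFD.sat, FO.sat, tr, ihφ, ihχ]
  | neg φ ih => intro s; simp [LFD.sat, FO.sat, tr, ih]
  | dep V u =>
    intro s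
    simp only [LFD.sat, tr, FO.fall, FO.imp, FO.sat, Tmap, Set.mem_setOf_eq, atomA0',
      not_exists, not_and, not_not, sat_bigAnd, List.mem_map, Finset.mem_toList,
      forall_exists_index]
    constructor
    · intro h t ht hA hC
      have hC' : ∀ v ∈ V, t (Sum.inl v) = t (Sum.inr v) := by
        intro v hv
        exact hC _ v ⟨hv, rfl⟩
      have hV : ∀ v ∈ V, s (Sum.inl v) = (fun i => t (Sum.inr i)) v := by
        intro v hv
        have : t (Sum.inl v) = s (Sum.inl v) := ht _ (by simp)
        simpa [this] using hC' v hv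
      have := h (fun i => t (Sum.inr i)) hA hV
      have hu : t (Sum.inl u) = s (Sum.inl u) := ht _ (by simp)
      simpa [hu] using this
    · intro h t ht hV
      set t' : (Fin n ⊕ Fin n) → α := Sum.elim (fun v => s (Sum.inl v)) t with ht'
      have hout : ∀ x ∉ Finset.image Sum.inr (Finset.univ : Finset (Fin n)),
          t' x = s x := by
        rintro (i | i) hx
        · rfl
        · simp at hx
      have := h t' hout ht (by
        rintro φ v ⟨hv, rfl⟩
        exact (hV v hv))
      exact this
  | ex V φ ih =>
    intro s
    simp only [LFD.sat, tr, FO.sat, Tmap, Set.mem_setOf_eq, atomA0]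
    constructor
    · rintro ⟨t, htA, hagree, hsat⟩
      refine ⟨Sum.elim t (fun i => s (Sum.inr i)), ?_, ?_, ?_⟩
      · rintro (v | i) hx
        · have hv : v ∈ V := by
            simp only [Finset.mem_image, Finset.mem_sdiff, Finset.mem_univ, true_and] at hx
            by_contra hv
            exact hx ⟨v, hv, rfl⟩
          simpa using (hagree v hv).symm
        · rfl
      · exact htA
      · exact (ih _).mp hsat
    · rintro ⟨t, hout, htA, hsat⟩
      refine ⟨fun v => t (Sum.inl v), htA, ?_, (ih t).mpr hsat⟩
      · intro v hv
        have : t (Sum.inl v) = s (Sum.inl v) := by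
          apply hout
          simp only [Finset.mem_image, Finset.mem_sdiff, Finset.mem_univ, true_and]
          rintro ⟨w, hw, h⟩
          exact hw (by cases h; exact hv)
        exact this.symm

/-- correctness of the first-order translation `tr` of LFD via `T`. -/
theorem tr_correct {Rel α : Type} {ar : Rel → ℕ} {n : ℕ}
    (ψ : LFD Rel ar (Fin n)) (M : Str (Option Rel) (exar ar n) α)
    (s : (Fin n ⊕ Fin n) → α) (hs : FO.sat M s atomA0) :
    LFD.sat (Tmap M).1 (Tmap M).2 (fun v => s (Sum.inl v)) ψ ↔
      FO.sat M s (FO.and (tr ψ) atomA0) := by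
  rw [show FO.sat M s (FO.and (tr ψ) atomA0) ↔ FO.sat M s (tr ψ) ∧ FO.sat M s atomA0 from Iff.rfl]
  rw [tr_sat]
  exact ⟨fun h => ⟨h, hs⟩, fun h => h.1⟩

end LFDPaper
end

section
/- If Z is a dependence bisimulation between dependence models (M,A) and (M',A'), then for every (s,s') ∈ Z and every LFD formula φ, (M,A),s ⊨ φ if and only if (M',A'),s' ⊨ φ. -/
namespace LFDPaper

variable {Rel Var α β X : Type} {ar : Rel → ℕ}

/-- LFD formulas are invariant under dependence bisimulations. -/
theorem depBisim_invariance {Rel Var α β : Type} {ar : Rel → ℕ}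
    (M : Str Rel ar α) (A : Set (Var → α)) (M' : Str Rel ar β) (A' : Set (Var → β))
    (Z : Set ((Var → α) × (Var → β))) (hZ : DepBisim M A M' A' Z)
    (s : Var → α) (s' : Var → β) (hss' : (s, s') ∈ Z) (φ : LFD Rel ar Var) :
    LFD.sat M A s φ ↔ LFD.sat M' A' s' φ := by
  obtain ⟨hmem, hmain⟩ := hZ
  induction φ generalizing s s' with
  | atom R vs => exact (hmain _ hss').1 R vs
  | and φ ψ ihφ ihψ =>
    simp only [LFD.sat]
    exact and_congr (ihφ s s' hss') (ihψ s s' hss')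
  | neg φ ih =>
    simp only [LFD.sat]
    exact not_congr (ih s s' hss')
  | ex V φ ih =>
    simp only [LFD.sat]
    constructor
    · rintro ⟨t, htA, hagree, hsat⟩
      obtain ⟨t', ht'A, hsub, htZ, _⟩ := (hmain _ hss').2.1 t htA
      exact ⟨t', ht'A, fun v hv => hsub (hagree v hv), (ih t t' htZ).1 hsat⟩
    · rintro ⟨t', ht'A, hagree, hsat⟩
      obtain ⟨t, htA, hsub, htZ, _⟩ := (hmain _ hss').2.2 t' ht'A
      exact ⟨t, htA, fun v hv => hsub (hagree v hv), (ih t t' htZ).2 hsat⟩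
  | dep V u =>
    simp only [LFD.sat]
    constructor
    · intro h t' ht'A hagree
      obtain ⟨t, htA, hsub, htZ, hdc⟩ := (hmain _ hss').2.2 t' ht'A
      have hu : u ∈ DclSem A s (eqSet s' t') := by
        intro r hrA hr
        exact h r hrA (fun v hv => hr v (hagree v hv))
      rw [show DclSem A s (eqSet s' t') = eqSet s' t' from hdc] at hu
      exact hu
    · intro h t htA hagree
      obtain ⟨t', ht'A, hsub, htZ, hdc⟩ := (hmain _ hss').2.1 t htA
      have hu : u ∈ DclSem A' s' (eqSet s t) := by
        intro r hrA hr
        exact h r hrA (fun v hv => hr v (hagree v hv))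
      rw [show DclSem A' s' (eqSet s t) = eqSet s t from hdc] at hu
      exact hu

end LFDPaper
end

section
/- Every dependence model (M,A) is dependence-bisimilar to a distinguished dependence model (M_d, A_d), obtained by replacing each value s(v) with the pair (v, s(v)): the relation {(s, s_d) | s ∈ A}, where s_d(v) = (v, s(v)), is a dependence bisimulation between (M,A) and (M_d, A_d). -/
namespace LFDPaper

variable {Rel Var α β X : Type} {ar : Rel → ℕ}

/-- every dependence model is dependence-bisimilar to its distinguished
companion, via the relation `{(s, s_d) | s ∈ A}`. -/
theorem distinguished_companion {Rel Var α : Type} {ar : Rel → ℕ}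
    (M : Str Rel ar α) (A : Set (Var → α)) :
    Distinguished (Ad A) ∧
    DepBisim M A (Md M A) (Ad A) {p | ∃ s ∈ A, p = (s, sd s)} := by
  constructor
  · rintro _ ⟨s, hs, rfl⟩ _ ⟨t, ht, rfl⟩ v w h
    exact congrArg Prod.fst h
  constructor
  · rintro p ⟨s, hs, rfl⟩
    exact ⟨hs, ⟨s, hs, rfl⟩⟩
  rintro p ⟨s, hs, rfl⟩
  refine ⟨?_, ?_, ?_⟩
  · intro R vs
    constructor
    · intro h
      exact ⟨s, hs, vs, fun i => rfl, h⟩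
    · rintro ⟨s', hs', us, heq, h⟩
      have h2 : (fun i => s' (us i)) = fun i => s (vs i) := by
        funext i
        have h1 := heq i
        have hfst : vs i = us i := congrArg Prod.fst h1
        have hsnd : s (vs i) = s' (us i) := congrArg Prod.snd h1
        exact hsnd.symm
      rw [h2] at h
      exact h
  · intro t ht
    refine ⟨sd t, ⟨t, ht, rfl⟩, ?_, ⟨t, ht, rfl⟩, ?_⟩
    · intro v hv
      have hv' : s v = t v := hv
      show sd s v = sd t v
      simp only [sd, hv']
    · ext u
      simp only [eqSet, Set.mem_setOf_eq]
      constructor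
      · intro h
        have := h (sd t) ⟨t, ht, rfl⟩ (fun v hv => by
          have hv' : s v = t v := hv
          simp only [sd, hv'])
        exact congrArg Prod.snd this
      · intro hu t' ht' hag
        exact hag u hu
  · rintro _ ⟨t, ht, rfl⟩
    have hE : eqSet (sd s) (sd t) = eqSet s t := by
      ext v
      simp only [eqSet, Set.mem_setOf_eq, sd, Prod.mk.injEq, true_and]
    refine ⟨t, ht, ?_, ⟨t, ht, rfl⟩, ?_⟩
    · intro v hv
      exact congrArg Prod.snd hv
    · rw [hE]
      ext u
      simp only [eqSet, Set.mem_setOf_eq]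
      constructor
      · intro h
        exact h t ht (fun v hv => hv)
      · intro hu r hr hag
        exact hag u hu

end LFDPaper
end

section
/- For every distinguished dependence model (M,A), admissible assignment s ∈ A, equality-free guarded-fragment formula φ, and map ρ : free(φ) → V_LFD, we have (M,A),s ⊨ τ_ρ(φ) if and only if G(M,A), s∘ρ ⊨ φ. -/
namespace LFDPaper

variable {Rel Var α β X : Type} {ar : Rel → ℕ}

theorem sat_lbigOr {Rel Var α : Type} {ar : Rel → ℕ} [Inhabited Var]
    (M : Str Rel ar α) (A : Set (Var → α)) (s : Var → α) (l : List (LFD Rel ar Var)) :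
    LFD.sat M A s (lbigOr l) ↔ ∃ χ ∈ l, LFD.sat M A s χ := by
  induction l with
  | nil =>
    simp only [lbigOr, List.foldr_nil, lbot, ltop, LFD.sat, List.not_mem_nil,
      false_and, exists_false, iff_false, not_not]
    intro t _ h
    exact h default (Finset.mem_singleton_self default)
  | cons a l ih =>
    simp only [lbigOr, List.foldr_cons, lor, LFD.sat, List.mem_cons] at ih ⊢
    rw [ih]
    by_cases h : LFD.sat M A s a <;> simp [h]

theorem fo_sat_mono {Rel X α : Type} {ar : Rel → ℕ} [DecidableEq X]
    (M : Str Rel ar α) (φ : FO Rel ar X) :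
    ∀ s t : X → α, (∀ x ∈ FO.free φ, s x = t x) → FO.sat M s φ → FO.sat M t φ := by
  induction φ with
  | atom R vs =>
    intro s t h hs
    have he : (fun i => t (vs i)) = fun i => s (vs i) :=
      funext fun i => (h (vs i) (by simp [FO.free])).symm
    simpa only [FO.sat, he] using hs
  | eq x y =>
    intro s t h hs
    simp only [FO.sat] at *
    rw [← h x (by simp [FO.free]), ← h y (by simp [FO.free])]
    exact hs
  | tru => intro s t _ _; trivial
  | and φ ψ ihφ ihψ =>
    intro s t h hs
    exact ⟨ihφ s t (fun x hx => h x (by simp [FO.free, hx])) hs.1,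
           ihψ s t (fun x hx => h x (by simp [FO.free, hx])) hs.2⟩
  | neg φ ihφ =>
    intro s t h hs
    exact fun ht => hs (ihφ t s (fun x hx => (h x (by simpa [FO.free] using hx)).symm) ht)
  | exs Z φ ihφ =>
    intro s t h hs
    obtain ⟨u, hu, hsat⟩ := hs
    classical
    refine ⟨fun x => if x ∈ Z then u x else t x, fun x hx => by simp [hx], ?_⟩
    apply ihφ u _ _ hsat
    intro x hx
    by_cases hz : x ∈ Z
    · simp [hz]
    · simp only [hz, if_false]
      rw [hu x hz, h x (by simp [FO.free, Finset.mem_sdiff, hx, hz])]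

theorem tau_correct_aux {Rel α X : Type} {ar : Rel → ℕ} {n : ℕ} [NeZero n]
    [Fintype X] [DecidableEq X]
    (M : Str Rel ar α) (A : Set (Fin n → α)) (hdist : Distinguished A)
    (φ : FO Rel ar X) (hφ : IsGF φ) :
    ∀ s ∈ A, ∀ ρ : X → Fin n,
      LFD.sat M A s (tau φ ρ) ↔ FO.sat (Gmap M A) (fun x => s (ρ x)) φ := by
  induction hφ with
  | atom R vs =>
    intro s hs ρ
    simp only [tau, LFD.sat, FO.sat, Gmap]
    constructor
    · intro h; exact ⟨h, s, hs, fun i => ⟨ρ (vs i), rfl⟩⟩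
    · exact fun h => h.1
  | and h1 h2 ih1 ih2 =>
    intro s hs ρ
    simp only [tau, LFD.sat, FO.sat, ih1 s hs ρ, ih2 s hs ρ]
  | neg h ihh =>
    intro s hs ρ
    simp only [tau, LFD.sat, FO.sat, ihh s hs ρ]
  | @exg Z G vs ψ hψ hcov ih =>
    intro s hs ρ
    classical
    set body : FO Rel ar X := FO.and (FO.atom G vs) ψ with hbody
    set V' : Finset (Fin n) := Finset.image ρ (FO.free (FO.exs Z body)) with hV'
    have hLHS : LFD.sat M A s (tau (FO.exs Z body) ρ) ↔
        ∃ ρ' : X → Fin n, (∀ x ∉ Z, ρ' x = ρ x) ∧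
          ∃ t ∈ A, (∀ v ∈ V', s v = t v) ∧
            (M.interp G (fun i => t (ρ' (vs i))) ∧ LFD.sat M A t (tau ψ ρ')) := by
      rw [show tau (FO.exs Z body) ρ
          = lbigOr ((((Finset.univ : Finset (X → Fin n)).filter
              (fun ρ' => ∀ x ∉ Z, ρ' x = ρ x)).toList).map
            (fun ρ' => LFD.ex V' (tau body ρ'))) from rfl, sat_lbigOr]
      simp only [List.mem_map, Finset.mem_toList, Finset.mem_filter, Finset.mem_univ, true_and,
        exists_exists_and_eq_and]
      constructor
      · rintro ⟨ρ', hρ', hsat⟩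
        obtain ⟨t, ht, hag, hsat⟩ := hsat
        exact ⟨ρ', hρ', t, ht, hag, hsat⟩
      · rintro ⟨ρ', hρ', t, ht, hag, hsat⟩
        exact ⟨ρ', hρ', t, ht, hag, hsat⟩
    rw [hLHS]
    have hfreeBody : ∀ x ∈ FO.free body, ∃ i, vs i = x := by
      intro x hx
      have := hcov hx
      simp only [Finset.mem_image, Finset.mem_univ, true_and] at this
      exact this
    constructor
    · rintro ⟨ρ', hρ', t, ht, hag, hG, hψsat⟩
      refine ⟨fun x => if x ∈ Z then t (ρ' x) else s (ρ x), fun x hx => by simp [hx], ?_⟩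
      have hkey : ∀ x ∈ FO.free body, t (ρ' x)
          = (if x ∈ Z then t (ρ' x) else s (ρ x)) := by
        intro x hx
        by_cases hz : x ∈ Z
        · simp [hz]
        · have hxm : ρ x ∈ V' := by
            rw [hV']
            exact Finset.mem_image_of_mem ρ (by
              show x ∈ FO.free body \ Z
              exact Finset.mem_sdiff.mpr ⟨hx, hz⟩)
          simp only [hz, if_false]
          rw [hρ' x hz, ← hag (ρ x) hxm]
      refine fo_sat_mono (Gmap M A) body (fun x => t (ρ' x)) _ hkey ?_
      refine ⟨⟨hG, t, ht, fun i => ⟨ρ' (vs i), rfl⟩⟩, ?_⟩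
      exact (ih t ht ρ').mp hψsat
    · rintro ⟨t', ht'Z, ⟨hG, t, ht, hcovt⟩, hψt'⟩
      have hw : ∀ i, ∃ v, t' (vs i) = t v := hcovt
      set ρ' : X → Fin n :=
        fun x => if h : ∃ i, vs i = x then (hw h.choose).choose else ρ x with hρ'def
      have hP : ∀ x, (∃ i, vs i = x) → t' x = t (ρ' x) := by
        intro x hx
        rw [hρ'def]
        simp only [dif_pos hx]
        have h2 : t' (vs hx.choose) = t ((hw hx.choose).choose) := (hw hx.choose).choose_spec
        have h3 : t' x = t' (vs hx.choose) := by rw [hx.choose_spec]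
        exact h3.trans h2
      have hρ'Z : ∀ x ∉ Z, ρ' x = ρ x := by
        intro x hz
        by_cases hx : ∃ i, vs i = x
        · have h1 : t (ρ' x) = s (ρ x) := by rw [← hP x hx]; exact ht'Z x hz
          exact hdist t ht s hs (ρ' x) (ρ x) h1
        · rw [hρ'def]; simp [dif_neg hx]
      refine ⟨ρ', hρ'Z, t, ht, ?_, ?_, ?_⟩
      · intro v hv
        rw [hV'] at hv
        obtain ⟨x, hx, rfl⟩ := Finset.mem_image.mp hv
        have hx' := Finset.mem_sdiff.mp hx
        have hex := hfreeBody x hx'.1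
        have h1 : t (ρ' x) = s (ρ x) := by
          rw [← hP x hex]; exact ht'Z x hx'.2
        rw [← h1, hρ'Z x hx'.2]
      · have he : (fun i => t (ρ' (vs i))) = fun i => t' (vs i) :=
          funext fun i => (hP (vs i) ⟨i, rfl⟩).symm
        rw [he]; exact hG
      · refine (ih t ht ρ').mpr ?_
        have hψfree : ∀ x ∈ FO.free ψ, t' x = t (ρ' x) := by
          intro x hx
          exact hP x (hfreeBody x (by simp [hbody, FO.free, hx]))
        have := fo_sat_mono (Gmap M A) ψ t' (fun x => t (ρ' x)) hψfree hψt'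
        exact this

/-- correctness of τ on distinguished dependence models. -/
theorem tau_correct {Rel α X : Type} {ar : Rel → ℕ} {n : ℕ} [NeZero n]
    [Fintype X] [DecidableEq X]
    (M : Str Rel ar α) (A : Set (Fin n → α)) (hdist : Distinguished A)
    (s : Fin n → α) (hs : s ∈ A)
    (φ : FO Rel ar X) (hφ : IsGF φ) (ρ : X → Fin n) :
    LFD.sat M A s (tau φ ρ) ↔ FO.sat (Gmap M A) (fun x => s (ρ x)) φ := by
  exact tau_correct_aux M A hdist φ hφ s hs ρ

end LFDPaper
end
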